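/- Let M be a unital C*-algebra and τ a faithful tracial positive unital linear functional on M; write ‖x‖₂ := √(Re τ(x*x)). Assume: (i) there is a sequence in the closed unit ball of M that is ‖·‖₂-dense in the closed unit ball; (ii) A ⊆ M is a *-subalgebra and there is a linear map E : M → M with E(y) ∈ A and ‖E(y)‖ ≤ ‖y‖ for all y, such that every sequence (u_n) of unitaries of M with ‖u_n x − x u_n‖₂ → 0 for all x ∈ M satisfies ‖u_n − E(u_n)‖₂ → 0; (iii) every a ∈ A with ‖a‖ ≤ 1 can be written a = v·b with v ∈ A a unitary of M and b ∈ A satisfying 0 ≤ b ≤ 1; (iv) every sequence of unitaries of M that is Cauchy for ‖·‖₂ has a ‖·‖₂-limit t ∈ M with ‖t‖ ≤ 1. Let α be a *-algebra automorphism of M that is approximately inner, i.e. there are unitaries (u_n) in M with ‖α(x) − u_n x u_n*‖₂ → 0 for every x ∈ M. Then there exist a unitary w ∈ M and a sequence of unitaries (z_n) all lying in A such that ‖α(x) − w z_n x z_n* w*‖₂ → 0 as n → ∞ for every x ∈ M. -/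

import Mathlib

set_option maxHeartbeats 2000000

open Filter Topology

set_option maxHeartbeats 1000000 in
lemma jones_aux {M : Type*} [NormedRing M] [StarRing M]
    (n2 : M → ℝ) (A : Set M)
    (hAmul : ∀ {a b : M}, a ∈ A → b ∈ A → a * b ∈ A)
    (E : M → M)
    (n2nonneg : ∀ x : M, 0 ≤ n2 x)
    (n2zero : n2 0 = 0)
    (tri : ∀ x y : M, n2 (x + y) ≤ n2 x + n2 y)
    (n2subrev : ∀ a b : M, n2 (a - b) = n2 (b - a))
    (trisub : ∀ a b c : M, n2 (a - c) ≤ n2 (a - b) + n2 (b - c))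
    (revtri : ∀ a b : M, |n2 a - n2 b| ≤ n2 (a - b))
    (n2lu : ∀ u x : M, star u * u = 1 → n2 (u * x) = n2 x)
    (n2ru : ∀ u x : M, u * star u = 1 → n2 (x * u) = n2 x)
    (n2unit : ∀ u : M, star u * u = 1 → n2 u = 1)
    (n2mulr : ∀ p q : M, n2 (p * q) ≤ n2 p * ‖q‖)
    (n2mull : ∀ p q : M, n2 (p * q) ≤ ‖p‖ * n2 q)
    (n2star : ∀ x : M, n2 (star x) = n2 x)
    (unorm : ∀ u : M, star u * u = 1 → ‖u‖ = 1)
    (hnormstar : ∀ x : M, ‖star x‖ = ‖x‖)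
    (unit_of : ∀ t : M, ‖t‖ ≤ 1 → n2 t = 1 → star t * t = 1)
    (hcentral : ∀ v : ℕ → M,
      (∀ n, star (v n) * v n = 1 ∧ v n * star (v n) = 1) →
      (∀ x : M, Tendsto (fun n => n2 (v n * x - x * v n)) atTop (nhds 0)) →
      Tendsto (fun n => n2 (v n - E (v n))) atTop (nhds 0))
    (nearZ : ∀ v : M, (star v * v = 1 ∧ v * star v = 1) → n2 (v - E v) ≤ 1 →
      ∃ z : M, z ∈ A ∧ (star z * z = 1 ∧ z * star z = 1) ∧
        n2 (v - z) ≤ n2 (v - E v) + Real.sqrt (2 * n2 (v - E v)))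
    (hcomplete : ∀ u : ℕ → M,
      (∀ n, star (u n) * u n = 1 ∧ u n * star (u n) = 1) →
      (∀ ε > (0 : ℝ), ∃ N, ∀ m ≥ N, ∀ n ≥ N, n2 (u m - u n) < ε) →
      ∃ t : M, ‖t‖ ≤ 1 ∧ Tendsto (fun n => n2 (u n - t)) atTop (nhds 0))
    (F : M → M)
    (u : ℕ → M) (hu : ∀ n, star (u n) * u n = 1 ∧ u n * star (u n) = 1)
    (huconv : ∀ x : M, Tendsto (fun n => n2 (F x - u n * x * star (u n))) atTop (nhds 0)) :
    ∃ (w : M) (z : ℕ → M),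
      (star w * w = 1 ∧ w * star w = 1) ∧
      (∀ n, z n ∈ A ∧ star (z n) * z n = 1 ∧ z n * star (z n) = 1) ∧
      ∀ x : M, Tendsto
        (fun n => n2 (F x - w * (z n * x * star (z n)) * star w)) atTop (nhds 0) := by
  have epsform : ∀ f : ℕ → ℝ, Tendsto f atTop (𝓝 0) → ∀ ε > (0:ℝ), ∃ N, ∀ n ≥ N, f n < ε := by
    intro f hf ε hε
    obtain ⟨N, hN⟩ := Metric.tendsto_atTop.mp hf ε hε
    exact ⟨N, fun n hn => lt_of_le_of_lt (le_abs_self _)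
      (by simpa [Real.dist_eq] using hN n hn)⟩
  have umul : ∀ a b : M, (star a * a = 1 ∧ a * star a = 1) →
      (star b * b = 1 ∧ b * star b = 1) →
      (star (a * b) * (a * b) = 1 ∧ (a * b) * star (a * b) = 1) := by
    intro a b ha hb
    constructor
    · have h : star (a * b) * (a * b) = star b * ((star a * a) * b) := by
        rw [star_mul]; noncomm_ring
      rw [h, ha.1, one_mul, hb.1]
    · have h : (a * b) * star (a * b) = a * ((b * star b) * star a) := by
        rw [star_mul]; noncomm_ring
      rw [h, hb.2, one_mul, ha.2]
  have ustar : ∀ a : M, (star a * a = 1 ∧ a * star a = 1) →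
      (star (star a) * star a = 1 ∧ star a * star (star a) = 1) := by
    intro a ha
    rw [star_star]
    exact ⟨ha.2, ha.1⟩
  -- Step 1: uniform absorption
  have key : ∀ ε > (0:ℝ), ∃ N, ∀ p ≥ N, ∀ q ≥ N,
      n2 (star (u p) * u q - E (star (u p) * u q)) < ε := by
    by_contra hcon
    push_neg at hcon
    obtain ⟨ε, hε, hN⟩ := hcon
    choose p hp q hq hd using hN
    set v : ℕ → M := fun k => star (u (p k)) * u (q k) with hv
    have hvu : ∀ k, star (v k) * v k = 1 ∧ v k * star (v k) = 1 := fun k =>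
      umul _ _ (ustar _ (hu (p k))) (hu (q k))
    have hvc : ∀ x : M, Tendsto (fun k => n2 (v k * x - x * v k)) atTop (nhds 0) := by
      intro x
      have hqq : Tendsto q atTop atTop := tendsto_atTop_mono hq tendsto_id
      have hpp : Tendsto p atTop atTop := tendsto_atTop_mono hp tendsto_id
      apply squeeze_zero (fun k => n2nonneg _)
        (g := fun k => n2 (F x - u (q k) * x * star (u (q k)))
          + n2 (F x - u (p k) * x * star (u (p k))))
      · intro k
        have hid : n2 (v k * x - x * v k)
            = n2 (u (q k) * x * star (u (q k)) - u (p k) * x * star (u (p k))) := by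
          have h1 : u (p k) * (v k * x - x * v k) * star (u (q k))
              = u (q k) * x * star (u (q k)) - u (p k) * x * star (u (p k)) := by
            have e1 : u (p k) * (v k * x) * star (u (q k))
                = (u (p k) * star (u (p k))) * (u (q k) * x * star (u (q k))) := by
              simp only [hv]; noncomm_ring
            have e2 : u (p k) * (x * v k) * star (u (q k))
                = (u (p k) * x * star (u (p k))) * (u (q k) * star (u (q k))) := by
              simp only [hv]; noncomm_ring
            rw [mul_sub, sub_mul, e1, e2, (hu (p k)).2, (hu (q k)).2, one_mul, mul_one]
          conv_rhs => rw [← h1]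
          rw [n2ru _ _ (by rw [star_star]; exact (hu (q k)).1),
            n2lu _ _ (hu (p k)).1]
        rw [hid]
        have := trisub (u (q k) * x * star (u (q k))) (F x) (u (p k) * x * star (u (p k)))
        rw [n2subrev _ (F x)] at this
        exact this
      · have t1 := (huconv x).comp hqq
        have t2 := (huconv x).comp hpp
        simpa using t1.add t2
    have habs := hcentral v hvu hvc
    obtain ⟨N, hlt⟩ := epsform _ habs ε hε
    exact absurd (hd N) (not_le.mpr (hlt N le_rfl))
  -- Step 3: recursive choice of indices
  choose g hg using fun k : ℕ => key ((1/2 : ℝ) ^ (2*k+4)) (by positivity)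
  set nn : ℕ → ℕ := fun k => Nat.rec (g 0) (fun k ih => max (ih + 1) (g (k+1))) k with hnn
  have hnnsucc : ∀ k, nn (k+1) = max (nn k + 1) (g (k+1)) := fun k => rfl
  have hnnmono : StrictMono nn := strictMono_nat_of_lt_succ (fun k => by
    rw [hnnsucc]; exact lt_of_lt_of_le (Nat.lt_succ_self _) (le_max_left _ _))
  have hnng : ∀ k, g k ≤ nn k := by
    intro k
    cases k with
    | zero => exact le_rfl
    | succ k => rw [hnnsucc]; exact le_max_right _ _
  set v : ℕ → M := fun k => star (u (nn k)) * u (nn (k+1)) with hv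
  have hvu : ∀ k, star (v k) * v k = 1 ∧ v k * star (v k) = 1 := fun k =>
    umul _ _ (ustar _ (hu (nn k))) (hu (nn (k+1)))
  have hdk : ∀ k, n2 (v k - E (v k)) < (1/2 : ℝ) ^ (2*k+4) := fun k =>
    hg k (nn k) (hnng k) (nn (k+1)) ((hnng k).trans (hnnmono (Nat.lt_succ_self k)).le)
  have etabound : ∀ k, n2 (v k - E (v k)) + Real.sqrt (2 * n2 (v k - E (v k)))
      ≤ (1/2 : ℝ) ^ k := by
    intro k
    have hd := (hdk k).le
    have h0 := n2nonneg (v k - E (v k))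
    have e1 : ((1/2:ℝ)) ^ (2*k+4) ≤ (1/2) ^ (k+1) :=
      pow_le_pow_of_le_one (by norm_num) (by norm_num) (by omega)
    have e2 : Real.sqrt (2 * n2 (v k - E (v k))) ≤ (1/2) ^ (k+1) := by
      have hsq : ((1/2:ℝ) ^ (k+1)) ^ 2 = (1/2) ^ (2*k+2) := by
        rw [← pow_mul]; ring_nf
      have hle : 2 * n2 (v k - E (v k)) ≤ ((1/2:ℝ) ^ (k+1)) ^ 2 := by
        rw [hsq]
        calc 2 * n2 (v k - E (v k)) ≤ 2 * (1/2:ℝ) ^ (2*k+4) := by linarith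
          _ = (1/2:ℝ) ^ (2*k+3) := by ring
          _ ≤ (1/2:ℝ) ^ (2*k+2) := pow_le_pow_of_le_one (by norm_num) (by norm_num) (by omega)
      calc Real.sqrt (2 * n2 (v k - E (v k))) ≤ Real.sqrt (((1/2:ℝ) ^ (k+1)) ^ 2) :=
            Real.sqrt_le_sqrt hle
        _ = (1/2:ℝ) ^ (k+1) := Real.sqrt_sq (by positivity)
    calc n2 (v k - E (v k)) + Real.sqrt (2 * n2 (v k - E (v k)))
        ≤ (1/2:ℝ) ^ (k+1) + (1/2) ^ (k+1) := add_le_add (hd.trans e1) e2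
      _ = (1/2:ℝ) ^ k := by ring
  have hdk1 : ∀ k, n2 (v k - E (v k)) ≤ 1 := by
    intro k
    refine (hdk k).le.trans ?_
    calc ((1/2:ℝ)) ^ (2*k+4) ≤ (1/2:ℝ) ^ 0 :=
        pow_le_pow_of_le_one (by norm_num) (by norm_num) (by omega)
      _ = 1 := pow_zero _
  choose z hzA hzu hzb using fun k => nearZ (v k) (hvu k) (hdk1 k)
  have hzbb : ∀ k, n2 (v k - z k) ≤ (1/2 : ℝ) ^ k := fun k => (hzb k).trans (etabound k)
  -- Step 4: the approximating unitaries and the Cauchy sequence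
  set Y : ℕ → M := fun k => Nat.rec (z 0) (fun k ih => ih * z (k+1)) k with hY
  have hYsucc : ∀ k, Y (k+1) = Y k * z (k+1) := fun k => rfl
  have hYA : ∀ k, Y k ∈ A := by
    intro k
    induction k with
    | zero => exact hzA 0
    | succ k ih => rw [hYsucc]; exact hAmul ih (hzA (k+1))
  have hYu : ∀ k, star (Y k) * Y k = 1 ∧ Y k * star (Y k) = 1 := by
    intro k
    induction k with
    | zero => exact hzu 0
    | succ k ih => rw [hYsucc]; exact umul _ _ ih (hzu (k+1))
  set W : ℕ → M := fun k => u (nn (k+1)) * star (Y k) with hW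
  have hWu : ∀ k, star (W k) * W k = 1 ∧ W k * star (W k) = 1 := fun k =>
    umul _ _ (hu (nn (k+1))) (ustar _ (hYu k))
  have hWd : ∀ k, n2 (W (k+1) - W k) ≤ (1/2 : ℝ) ^ (k+1) := by
    intro k
    have e0 : W (k+1) - W k = (u (nn (k+2)) * star (z (k+1)) - u (nn (k+1))) * star (Y k) := by
      show u (nn (k+2)) * star (Y k * z (k+1)) - u (nn (k+1)) * star (Y k) = _
      rw [star_mul, sub_mul, mul_assoc]
    rw [e0, n2ru _ _ (by rw [star_star]; exact (hYu k).1)]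
    have e1 : star (u (nn (k+1))) * (u (nn (k+2)) * star (z (k+1)) - u (nn (k+1)))
        = v (k+1) * star (z (k+1)) - 1 := by
      rw [mul_sub, (hu (nn (k+1))).1, hv]
      simp only [mul_assoc]
    rw [← n2lu (star (u (nn (k+1)))) _ (by rw [star_star]; exact (hu (nn (k+1))).2), e1,
      ← n2ru (z (k+1)) _ (hzu (k+1)).2]
    have e2 : (v (k+1) * star (z (k+1)) - 1) * z (k+1) = v (k+1) - z (k+1) := by
      rw [sub_mul, one_mul, mul_assoc, (hzu (k+1)).1, mul_one]
    rw [e2]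
    exact hzbb (k+1)
  have hWtel : ∀ l m, l ≤ m → n2 (W m - W l) ≤ (1/2:ℝ) ^ l - (1/2:ℝ) ^ m := by
    intro l m h
    induction m, h using Nat.le_induction with
    | base => rw [sub_self, n2zero, sub_self]
    | succ m hm ih =>
      have h1 := trisub (W (m+1)) (W m) (W l)
      have h2 := hWd m
      have h3 : ((1/2:ℝ)) ^ (m+1) = (1/2) ^ m / 2 := by ring
      linarith
  have hWcau : ∀ ε > (0:ℝ), ∃ N, ∀ m ≥ N, ∀ n ≥ N, n2 (W m - W n) < ε := by
    intro ε hε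
    obtain ⟨L, hL⟩ := exists_pow_lt_of_lt_one hε (by norm_num : (1/2:ℝ) < 1)
    refine ⟨L, fun m hm n hn => ?_⟩
    have hLb : ∀ i j : ℕ, L ≤ i → i ≤ j → n2 (W j - W i) < ε := by
      intro i j hLi hij
      calc n2 (W j - W i) ≤ (1/2:ℝ) ^ i - (1/2:ℝ) ^ j := hWtel i j hij
        _ ≤ (1/2:ℝ) ^ i := by
              have : (0:ℝ) ≤ (1/2:ℝ) ^ j := by positivity
              linarith
        _ ≤ (1/2:ℝ) ^ L := pow_le_pow_of_le_one (by norm_num) (by norm_num) hLi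
        _ < ε := hL
    rcases le_total n m with h | h
    · exact hLb n m hn h
    · rw [n2subrev]; exact hLb m n hm h
  obtain ⟨w, hw1, hwconv⟩ := hcomplete W hWu hWcau
  -- the limit is a unitary
  have hn2w : n2 w = 1 := by
    have h1 : ∀ k, |1 - n2 w| ≤ n2 (W k - w) := by
      intro k
      have := revtri (W k) w
      rwa [n2unit _ (hWu k).1] at this
    have h2 : |1 - n2 w| ≤ 0 := ge_of_tendsto' hwconv h1
    have h3 : |1 - n2 w| = 0 := le_antisymm h2 (abs_nonneg _)
    have := abs_eq_zero.mp h3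
    linarith
  have hwu1 : star w * w = 1 := unit_of w hw1 hn2w
  have hwu2 : w * star w = 1 := by
    have h1 : ‖star w‖ ≤ 1 := by rwa [hnormstar]
    have h2 : n2 (star w) = 1 := by rwa [n2star]
    have := unit_of (star w) h1 h2
    rwa [star_star] at this
  refine ⟨w, Y, ⟨hwu1, hwu2⟩, fun k => ⟨hYA k, hYu k⟩, ?_⟩
  intro x
  have hnnmono2 : StrictMono (fun k => nn (k+1)) := fun a b h => hnnmono (Nat.succ_lt_succ h)
  apply squeeze_zero (fun k => n2nonneg _)
    (g := fun k => n2 (F x - u (nn (k+1)) * x * star (u (nn (k+1))))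
      + (2 * ‖x‖) * n2 (W k - w))
  · intro k
    set a : M := u (nn (k+1)) with ha
    set c : M := w * Y k with hc
    have hWY : W k * Y k = a := by
      show u (nn (k+1)) * star (Y k) * Y k = a
      rw [mul_assoc, (hYu k).1, mul_one]
    have hgoal1 : w * (Y k * x * star (Y k)) * star w = c * x * star c := by
      rw [hc, star_mul]
      noncomm_ring
    have hac : n2 (a - c) = n2 (W k - w) := by
      rw [← hWY, hc, ← sub_mul, n2ru _ _ (hYu k).2]
    have hsplit : a * x * star a - c * x * star c
        = (a - c) * (x * star a) + (c * x) * (star a - star c) := by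
      noncomm_ring
    have hna : ‖a‖ = 1 := unorm _ (hu _).1
    have hnc : ‖c‖ ≤ 1 := by
      rw [hc]
      calc ‖w * Y k‖ ≤ ‖w‖ * ‖Y k‖ := norm_mul_le _ _
        _ ≤ 1 * 1 := mul_le_mul hw1 (le_of_eq (unorm _ (hYu k).1)) (norm_nonneg _)
            zero_le_one
        _ = 1 := mul_one 1
    have hb1 : n2 ((a - c) * (x * star a)) ≤ n2 (W k - w) * ‖x‖ := by
      calc n2 ((a - c) * (x * star a)) ≤ n2 (a - c) * ‖x * star a‖ := n2mulr _ _
        _ ≤ n2 (a - c) * (‖x‖ * ‖star a‖) :=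
            mul_le_mul_of_nonneg_left (norm_mul_le _ _) (n2nonneg _)
        _ = n2 (W k - w) * ‖x‖ := by rw [hac, hnormstar, hna, mul_one]
    have hb2 : n2 ((c * x) * (star a - star c)) ≤ ‖x‖ * n2 (W k - w) := by
      calc n2 ((c * x) * (star a - star c)) ≤ ‖c * x‖ * n2 (star a - star c) := n2mull _ _
        _ = ‖c * x‖ * n2 (a - c) := by rw [← star_sub, n2star]
        _ ≤ (‖c‖ * ‖x‖) * n2 (a - c) :=
            mul_le_mul_of_nonneg_right (norm_mul_le _ _) (n2nonneg _)
        _ ≤ (1 * ‖x‖) * n2 (a - c) := by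
            have := mul_le_mul_of_nonneg_right
              (mul_le_mul_of_nonneg_right hnc (norm_nonneg x)) (n2nonneg (a - c))
            exact this
        _ = ‖x‖ * n2 (W k - w) := by rw [one_mul, hac]
    calc n2 (F x - w * (Y k * x * star (Y k)) * star w)
        ≤ n2 (F x - a * x * star a) + n2 (a * x * star a - w * (Y k * x * star (Y k)) * star w) :=
          trisub _ _ _
      _ = n2 (F x - a * x * star a) + n2 (a * x * star a - c * x * star c) := by rw [hgoal1]
      _ ≤ n2 (F x - a * x * star a) + (n2 ((a - c) * (x * star a))
            + n2 ((c * x) * (star a - star c))) := by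
          have h := hsplit ▸ tri ((a - c) * (x * star a)) ((c * x) * (star a - star c))
          exact add_le_add le_rfl (by rw [hsplit]; exact tri _ _)
      _ ≤ n2 (F x - a * x * star a) + (n2 (W k - w) * ‖x‖ + ‖x‖ * n2 (W k - w)) := by
          exact add_le_add le_rfl (add_le_add hb1 hb2)
      _ = n2 (F x - u (nn (k+1)) * x * star (u (nn (k+1)))) + (2 * ‖x‖) * n2 (W k - w) := by
          rw [ha]; ring
  · have t1 := (huconv x).comp hnnmono2.tendsto_atTop
    have t2 := hwconv.const_mul (2 * ‖x‖)
    simpa using t1.add t2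


/-- Jones' proposition: under the hypotheses (separability of the unit ball in `‖·‖₂`,
a contractive linear map `E` into the *-subalgebra `A` absorbing central sequences of
unitaries, polar decompositions of contractions of `A` inside `A`, and `‖·‖₂`-completeness
of the unitaries), every approximately inner *-automorphism `α` of `M` can be written as
`Ad(w) ∘ lim_n Ad(z_n)` with `w` a unitary of `M` and `z_n` unitaries lying in `A`. -/
theorem approxInner_factors_through_subalgebra
    {M : Type*} [NormedRing M] [StarRing M] [CStarRing M] [CompleteSpace M]
    [NormedAlgebra ℂ M] [StarModule ℂ M] [PartialOrder M] [StarOrderedRing M]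
    (τ : M →ₗ[ℂ] ℂ) (hτ1 : τ 1 = 1)
    (hτpos : ∀ x : M, 0 ≤ (τ (star x * x)).re ∧ (τ (star x * x)).im = 0)
    (hτtr : ∀ x y : M, τ (x * y) = τ (y * x))
    (hτfaith : ∀ x : M, τ (star x * x) = 0 → x = 0)
    (n2 : M → ℝ) (hn2 : ∀ x, n2 x = Real.sqrt ((τ (star x * x)).re))
    -- (i) `‖·‖₂`-separability of the closed unit ball
    (xs : ℕ → M) (hxs1 : ∀ m, ‖xs m‖ ≤ 1)
    (hdense : ∀ y : M, ‖y‖ ≤ 1 → ∀ ε > (0 : ℝ), ∃ m, n2 (y - xs m) < ε)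
    -- (ii) a contractive linear map into the *-subalgebra `A` absorbing central sequences
    (A : StarSubalgebra ℂ M) (E : M →ₗ[ℂ] M)
    (hEA : ∀ y : M, E y ∈ A) (hEnorm : ∀ y : M, ‖E y‖ ≤ ‖y‖)
    (hcentral : ∀ v : ℕ → M,
      (∀ n, star (v n) * v n = 1 ∧ v n * star (v n) = 1) →
      (∀ x : M, Tendsto (fun n => n2 (v n * x - x * v n)) atTop (nhds 0)) →
      Tendsto (fun n => n2 (v n - E (v n))) atTop (nhds 0))
    -- (iii) polar decomposition of contractions of `A` inside `A`
    (hpolar : ∀ a ∈ A, ‖a‖ ≤ 1 → ∃ v b : M, v ∈ A ∧ b ∈ A ∧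
      (star v * v = 1 ∧ v * star v = 1) ∧ 0 ≤ b ∧ b ≤ 1 ∧ a = v * b)
    -- (iv) `‖·‖₂`-Cauchy sequences of unitaries have `‖·‖₂`-limits of norm at most one
    (hcomplete : ∀ u : ℕ → M,
      (∀ n, star (u n) * u n = 1 ∧ u n * star (u n) = 1) →
      (∀ ε > (0 : ℝ), ∃ N, ∀ m ≥ N, ∀ n ≥ N, n2 (u m - u n) < ε) →
      ∃ t : M, ‖t‖ ≤ 1 ∧ Tendsto (fun n => n2 (u n - t)) atTop (nhds 0))
    -- `α` is an approximately inner *-automorphism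
    (α : M ≃⋆ₐ[ℂ] M)
    (hα : ∃ u : ℕ → M, (∀ n, star (u n) * u n = 1 ∧ u n * star (u n) = 1) ∧
      ∀ x : M, Tendsto (fun n => n2 (α x - u n * x * star (u n))) atTop (nhds 0)) :
    ∃ (w : M) (z : ℕ → M),
      (star w * w = 1 ∧ w * star w = 1) ∧
      (∀ n, z n ∈ A ∧ star (z n) * z n = 1 ∧ z n * star (z n) = 1) ∧
      ∀ x : M, Tendsto
        (fun n => n2 (α x - w * (z n * x * star (z n)) * star w)) atTop (nhds 0) := by
  
  letI : CStarAlgebra M := { ‹NormedRing M›, ‹StarRing M›, ‹CompleteSpace M›, ‹CStarRing M›,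
    ‹NormedAlgebra ℂ M›, ‹StarModule ℂ M› with }
  -- τ is nonneg on nonneg elements
  have tpos : ∀ a : M, 0 ≤ a → 0 ≤ (τ a).re ∧ (τ a).im = 0 := by
    intro a ha
    rw [StarOrderedRing.nonneg_iff] at ha
    induction ha using AddSubmonoid.closure_induction with
    | mem x hx => obtain ⟨s, rfl⟩ := hx; exact hτpos s
    | zero => simp
    | add x y _ _ hx hy =>
      rw [map_add]
      exact ⟨by simpa using add_nonneg hx.1 hy.1, by simp [hx.2, hy.2]⟩
  have tmono : ∀ a b : M, a ≤ b → (τ a).re ≤ (τ b).re := by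
    intro a b hab
    have := (tpos (b - a) (sub_nonneg.mpr hab)).1
    rw [map_sub] at this
    simp only [Complex.sub_re] at this
    linarith
  -- Hermitian symmetry of the sesquilinear form
  have him : ∀ z : M, (τ (star z * z)).im = 0 := fun z => (hτpos z).2
  have herm : ∀ x y : M, τ (star y * x) = starRingEnd ℂ (τ (star x * y)) := by
    intro x y
    have key1 : ∀ x y : M, (τ (star x * y) + τ (star y * x)).im = 0 := by
      intro x y
      have h := him (x + y)
      have : star (x + y) * (x + y)
          = star x * x + (star x * y + star y * x) + star y * y := by
        rw [star_add]; noncomm_ring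
      rw [this] at h
      simp only [map_add, Complex.add_im, him x, him y] at h
      simpa [Complex.add_im] using h
    have h1 := key1 x y
    have h2 := key1 (Complex.I • y) x
    rw [show star x * (Complex.I • y) = Complex.I • (star x * y) by
        rw [mul_smul_comm],
      show star (Complex.I • y) * x = (starRingEnd ℂ Complex.I) • (star y * x) by
        rw [star_smul, smul_mul_assoc]; rfl] at h2
    simp only [map_smul, Complex.conj_I, smul_eq_mul, Complex.add_im, Complex.mul_im,
      Complex.neg_re, Complex.neg_im, Complex.I_re, Complex.I_im] at h2
    simp only [Complex.add_im] at h1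
    apply Complex.ext
    · simp only [Complex.conj_re]; linarith
    · simp only [Complex.conj_im]; linarith
  -- basic n2 facts
  have n2nonneg : ∀ x : M, 0 ≤ n2 x := fun x => hn2 x ▸ Real.sqrt_nonneg _
  have n2zero : n2 0 = 0 := by simp [hn2]
  have taueq : ∀ x : M, ((τ (star x * x)).re : ℂ) = τ (star x * x) := by
    intro x
    apply Complex.ext <;> simp [him x]
  have n2sq : ∀ x : M, n2 x ^ 2 = (τ (star x * x)).re := by
    intro x; rw [hn2, Real.sq_sqrt (hτpos x).1]
  have n2eq_zero : ∀ x : M, n2 x = 0 → x = 0 := by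
    intro x hx
    apply hτfaith
    rw [hn2] at hx
    have h0 : (τ (star x * x)).re = 0 := by
      have := (hτpos x).1
      rcases this.eq_or_lt with h | h
      · exact h.symm
      · exact absurd hx (by positivity)
    rw [← taueq x, h0]; simp
  -- Cauchy–Schwarz
  have cs : ∀ x y : M, ‖τ (star x * y)‖ ≤ n2 x * n2 y := by
    intro x y
    by_cases hy : y = 0
    · simp [hy, n2zero]
    · set r : ℝ := (τ (star y * y)).re with hr
      have hr0 : 0 ≤ r := (hτpos y).1
      have hrne : r ≠ 0 := by
        intro h0
        exact hy (hτfaith y (by rw [← taueq y, ← hr, h0]; simp))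
      have hrpos : 0 < r := hr0.lt_of_ne (Ne.symm hrne)
      set s : ℂ := τ (star x * y) with hs
      set t : ℂ := starRingEnd ℂ s / r with ht
      have hexp : τ (star (x - t • y) * (x - t • y))
          = τ (star x * x) - t * s - starRingEnd ℂ t * τ (star y * x)
            + (starRingEnd ℂ t * t) * τ (star y * y) := by
        have expand : star (x - t • y) * (x - t • y)
            = star x * x - t • (star x * y) - (starRingEnd ℂ t • (star y * x)
              - (starRingEnd ℂ t * t) • (star y * y)) := by
          rw [star_sub, star_smul, sub_mul, mul_sub, mul_sub]
          rw [mul_smul_comm, smul_mul_assoc, smul_mul_assoc, mul_smul_comm, smul_smul]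
          rfl
        rw [expand, map_sub, map_sub, map_sub, map_smul, map_smul, map_smul]
        simp only [smul_eq_mul, ← hs]
        ring
      have hre := (tpos _ (star_mul_self_nonneg (x - t • y))).1
      rw [hexp, herm x y, ← hs] at hre
      -- compute the scalar terms
      have hts : t * s = ((Complex.normSq s / r : ℝ) : ℂ) := by
        rw [ht, div_mul_eq_mul_div, mul_comm, ← Complex.normSq_conj s, Complex.mul_conj,
          Complex.normSq_conj]
        push_cast
        ring
      have hct : starRingEnd ℂ t = s / (r : ℂ) := by
        rw [ht, map_div₀, Complex.conj_conj, Complex.conj_ofReal]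
      have hcts : starRingEnd ℂ t * starRingEnd ℂ s = ((Complex.normSq s / r : ℝ) : ℂ) := by
        rw [hct, div_mul_eq_mul_div, Complex.mul_conj]
        push_cast
        ring
      have hctt : starRingEnd ℂ t * t * (r : ℂ)
          = ((Complex.normSq s / r : ℝ) : ℂ) := by
        rw [mul_comm (starRingEnd ℂ t) t, Complex.mul_conj, ht, Complex.normSq_div,
          Complex.normSq_conj]
        push_cast
        rw [Complex.normSq_ofReal]
        have : (r : ℂ) ≠ 0 := by exact_mod_cast hrne
        field_simp
        push_cast
        ring
      rw [show τ (star y * y) = (r : ℝ) from (taueq y).symm] at hre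
      rw [hts, hcts, hctt] at hre
      simp only [Complex.sub_re, Complex.add_re, Complex.ofReal_re] at hre
      have hnormsq : Complex.normSq s ≤ (τ (star x * x)).re * r := by
        have := hre
        have h2 : 0 ≤ (τ (star x * x)).re - Complex.normSq s / r := by linarith
        calc Complex.normSq s = (Complex.normSq s / r) * r := by field_simp
        _ ≤ (τ (star x * x)).re * r := by nlinarith
      calc ‖τ (star x * y)‖ = Real.sqrt (Complex.normSq s) := by
            rw [← hs, Complex.norm_def]
      _ ≤ Real.sqrt ((τ (star x * x)).re * r) := Real.sqrt_le_sqrt hnormsq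
      _ = n2 x * n2 y := by rw [Real.sqrt_mul (hτpos x).1, hn2, hn2, hr]
  haveI : Nontrivial M := nontrivial_of_ne 1 0 (by
    intro h
    apply (one_ne_zero : (1:ℂ) ≠ 0)
    rw [← hτ1, h, map_zero])
  -- triangle inequality
  have tri : ∀ x y : M, n2 (x + y) ≤ n2 x + n2 y := by
    intro x y
    have hexp : star (x + y) * (x + y)
        = star x * x + (star x * y + star y * x) + star y * y := by
      rw [star_add]; noncomm_ring
    have h1 : (τ (star (x + y) * (x + y))).re ≤ (n2 x + n2 y) ^ 2 := by
      rw [hexp]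
      simp only [map_add, Complex.add_re]
      have hBre : (τ (star x * y)).re + (τ (star y * x)).re ≤ 2 * (n2 x * n2 y) := by
        rw [herm x y]
        simp only [Complex.conj_re]
        have h2 := Complex.re_le_norm (τ (star x * y))
        have h3 := cs x y
        nlinarith
      nlinarith [n2sq x, n2sq y]
    rw [hn2]
    calc Real.sqrt ((τ (star (x + y) * (x + y))).re)
        ≤ Real.sqrt ((n2 x + n2 y) ^ 2) := Real.sqrt_le_sqrt h1
      _ = n2 x + n2 y := Real.sqrt_sq (add_nonneg (n2nonneg x) (n2nonneg y))
  have n2neg : ∀ x : M, n2 (-x) = n2 x := by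
    intro x; rw [hn2, hn2]; simp
  have n2subrev : ∀ a b : M, n2 (a - b) = n2 (b - a) := by
    intro a b; rw [← neg_sub, n2neg]
  have trisub : ∀ a b c : M, n2 (a - c) ≤ n2 (a - b) + n2 (b - c) := by
    intro a b c
    simpa using tri (a - b) (b - c)
  have revtri : ∀ a b : M, |n2 a - n2 b| ≤ n2 (a - b) := by
    intro a b
    rw [abs_le]
    constructor
    · have := tri (b - a) a; simp at this
      have h2 := n2subrev a b
      linarith
    · have := tri (a - b) b; simp at this; linarith
  have n2star : ∀ x : M, n2 (star x) = n2 x := by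
    intro x; rw [hn2, hn2, star_star, hτtr]
  have n2lu : ∀ u x : M, star u * u = 1 → n2 (u * x) = n2 x := by
    intro u x h
    rw [hn2, hn2]
    congr 2
    have : star (u * x) * (u * x) = star x * ((star u * u) * x) := by
      simp [star_mul, mul_assoc]
    rw [this, h, one_mul]
  have n2ru : ∀ u x : M, u * star u = 1 → n2 (x * u) = n2 x := by
    intro u x h
    rw [hn2, hn2]
    congr 2
    have h1 : star (x * u) * (x * u) = star u * ((star x * x) * u) := by
      simp [star_mul, mul_assoc]
    rw [h1, hτtr, mul_assoc, h, mul_one]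
  have unorm : ∀ u : M, star u * u = 1 → ‖u‖ = 1 := by
    intro u h
    have h1 := CStarRing.norm_star_mul_self (x := u)
    rw [h, norm_one] at h1
    have h3 : (‖u‖ - 1) * (‖u‖ + 1) = 0 := by nlinarith
    rcases mul_eq_zero.mp h3 with h4 | h4
    · linarith
    · nlinarith [norm_nonneg u]
  have n2unit : ∀ u : M, star u * u = 1 → n2 u = 1 := by
    intro u h; rw [hn2, h, hτ1]; simp
  have rpos : ∀ r : ℝ, 0 ≤ r → (0 : M) ≤ r • (1 : M) := by
    intro r hr
    have : r • (1 : M) = star (Real.sqrt r • (1 : M)) * (Real.sqrt r • (1 : M)) := by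
      rw [star_smul, star_one, star_trivial, smul_mul_smul_comm, mul_one,
        Real.mul_self_sqrt hr]
    rw [this]
    exact star_mul_self_nonneg _
  have tsmul : ∀ (r : ℝ) (y : M), τ (r • y) = r • τ y := fun r y =>
    LinearMap.map_smul_of_tower τ r y
  have n2mulr : ∀ p q : M, n2 (p * q) ≤ n2 p * ‖q‖ := by
    intro p q
    have h1 : τ (star (p * q) * (p * q)) = τ (p * (q * star q) * star p) := by
      rw [star_mul, hτtr]
      congr 1
      noncomm_ring
    have h2 : q * star q ≤ (‖q‖ ^ 2) • (1 : M) := by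
      have := CStarAlgebra.mul_star_le_algebraMap_norm_sq (A := M) (a := q)
      rwa [Algebra.algebraMap_eq_smul_one] at this
    have h3 : p * (q * star q) * star p ≤ (‖q‖ ^ 2) • (p * star p) := by
      have := star_right_conjugate_le_conjugate h2 p
      rwa [mul_smul_comm, smul_mul_assoc, mul_one] at this
    have h4 : (τ (p * (q * star q) * star p)).re ≤ ‖q‖ ^ 2 * (τ (p * star p)).re := by
      have := tmono _ _ h3
      rwa [tsmul, Complex.real_smul, Complex.mul_re, Complex.ofReal_re,
        Complex.ofReal_im, zero_mul, sub_zero] at this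
    have h5 : (τ (p * star p)).re = n2 p ^ 2 := by
      rw [hτtr, ← n2sq]
    have h6 : (τ (star (p * q) * (p * q))).re ≤ (n2 p * ‖q‖) ^ 2 := by
      rw [h1]
      calc (τ (p * (q * star q) * star p)).re ≤ ‖q‖ ^ 2 * (τ (p * star p)).re := h4
        _ = (n2 p * ‖q‖) ^ 2 := by rw [h5]; ring
    rw [hn2]
    calc Real.sqrt ((τ (star (p * q) * (p * q))).re)
        ≤ Real.sqrt ((n2 p * ‖q‖) ^ 2) := Real.sqrt_le_sqrt h6
      _ = n2 p * ‖q‖ := Real.sqrt_sq (mul_nonneg (n2nonneg p) (norm_nonneg q))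
  have n2mull : ∀ p q : M, n2 (p * q) ≤ ‖p‖ * n2 q := by
    intro p q
    calc n2 (p * q) = n2 (star (p * q)) := (n2star _).symm
      _ = n2 (star q * star p) := by rw [star_mul]
      _ ≤ n2 (star q) * ‖star p‖ := n2mulr _ _
      _ = ‖p‖ * n2 q := by rw [n2star, norm_star]; ring
  -- ε-form of convergence to 0
  have epsform : ∀ f : ℕ → ℝ, Tendsto f atTop (𝓝 0) → ∀ ε > (0:ℝ), ∃ N, ∀ n ≥ N, f n < ε := by
    intro f hf ε hε
    obtain ⟨N, hN⟩ := Metric.tendsto_atTop.mp hf ε hε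
    exact ⟨N, fun n hn => lt_of_le_of_lt (le_abs_self _)
      (by simpa [Real.dist_eq] using hN n hn)⟩
  -- unitarity from norm conditions
  have unit_of : ∀ t : M, ‖t‖ ≤ 1 → (τ (star t * t)).re = 1 → star t * t = 1 := by
    intro t ht htr
    have hle : star t * t ≤ 1 := by
      have h1 : star t * t ≤ (‖t‖ ^ 2) • (1 : M) := by
        have := CStarAlgebra.star_mul_le_algebraMap_norm_sq (A := M) (a := t)
        rwa [Algebra.algebraMap_eq_smul_one] at this
      refine h1.trans ?_
      have h2 : (1 : M) - ‖t‖ ^ 2 • 1 = (1 - ‖t‖ ^ 2) • 1 := by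
        rw [sub_smul, one_smul]
      have h3 : (0:M) ≤ (1 - ‖t‖ ^ 2) • 1 := rpos _ (by nlinarith [norm_nonneg t])
      have := sub_nonneg.mp (h2 ▸ h3)
      exact this
    have hc : (0:M) ≤ 1 - star t * t := sub_nonneg.mpr hle
    have hτc : τ (1 - star t * t) = 0 := by
      apply Complex.ext
      · rw [map_sub, hτ1]
        simp [htr]
      · exact (tpos _ hc).2
    set c : M := 1 - star t * t with hcdef
    set s : M := CFC.sqrt c with hsdef
    have hss : s * s = c := CFC.sqrt_mul_sqrt_self c hc
    have hsa : star s = s := (IsSelfAdjoint.of_nonneg (CFC.sqrt_nonneg (a := c))).star_eq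
    have hs0 : s = 0 := hτfaith s (by rw [hsa, hss, hτc])
    have hc0 : c = 0 := by rw [← hss, hs0, mul_zero]
    have h9 : (1:M) - star t * t = 0 := hcdef ▸ hc0
    have := sub_eq_zero.mp h9
    exact this.symm
  -- Step 2: approximating near-E unitaries by unitaries of A
  have nearZ : ∀ v : M, (star v * v = 1 ∧ v * star v = 1) → n2 (v - E v) ≤ 1 →
      ∃ z : M, z ∈ A ∧ (star z * z = 1 ∧ z * star z = 1) ∧
        n2 (v - z) ≤ n2 (v - E v) + Real.sqrt (2 * n2 (v - E v)) := by
    intro v hvu hle1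
    set ε : ℝ := n2 (v - E v) with hεdef
    have hε0 : 0 ≤ ε := n2nonneg _
    have hEvnorm : ‖E v‖ ≤ 1 := (hEnorm v).trans (le_of_eq (unorm v hvu.1))
    obtain ⟨zz, b, hzA, hbA, hzu, hb0, hb1, hEzb⟩ := hpolar (E v) (hEA v) hEvnorm
    refine ⟨zz, hzA, hzu, ?_⟩
    have hn2v : n2 v = 1 := n2unit v hvu.1
    have ha : 1 - ε ≤ (τ (star v * (E v : M))).re := by
      have h1 : τ (star v * v) - τ (star v * E v) = τ (star v * (v - E v)) := by
        rw [mul_sub, map_sub]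
      have h2 : ‖τ (star v * (v - E v))‖ ≤ ε := by
        have := cs v (v - E v)
        rwa [hn2v, one_mul, ← hεdef] at this
      have h3 : |(τ (star v * (v - E v))).re| ≤ ε := (Complex.abs_re_le_norm _).trans h2
      have h4 : (τ (star v * v)).re - (τ (star v * E v)).re
          = (τ (star v * (v - E v))).re := by
        rw [← Complex.sub_re, h1]
      rw [hvu.1, hτ1, Complex.one_re] at h4
      have h5 := (abs_le.mp h3).2
      linarith
    have hbsa : star b = b := (IsSelfAdjoint.of_nonneg hb0).star_eq
    have hb : (τ (star v * (E v : M))).re ≤ n2 b := by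
      have h1 : τ (star v * (E v : M)) = τ (star (star zz * v) * b) := by
        rw [hEzb, star_mul, star_star, mul_assoc]
      have h2 := cs (star zz * v) b
      rw [n2lu _ _ (by rw [star_star]; exact hzu.2), hn2v, one_mul] at h2
      rw [h1]
      exact (Complex.re_le_norm _).trans h2
    have hτb0 : 0 ≤ (τ b).re := (tpos b hb0).1
    have hc : n2 b ≤ Real.sqrt ((τ b).re) := by
      have hmono : (τ (b * b)).re ≤ (τ b).re := by
        have hpow := CStarAlgebra.pow_antitone hb0 hb1 (by norm_num : (1:ℕ) ≤ 2)
        have h := tmono _ _ hpow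
        simpa [pow_one, pow_two] using h
      rw [hn2 b, hbsa]
      exact Real.sqrt_le_sqrt hmono
    have hd : 1 - ε ≤ Real.sqrt ((τ b).re) := le_trans (ha.trans hb) hc
    have he : (1 - ε) ^ 2 ≤ (τ b).re := by
      have hsq := Real.sq_sqrt hτb0
      nlinarith [Real.sqrt_nonneg ((τ b).re), sub_nonneg.mpr hle1]
    have h1b0 : (0:M) ≤ 1 - b := sub_nonneg.mpr hb1
    have h1b1 : (1:M) - b ≤ 1 := by
      have := sub_le_self (1:M) hb0
      simpa using this
    have hsq2 : (τ ((1 - b) * (1 - b))).re ≤ (τ (1 - b)).re := by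
      have hpow := CStarAlgebra.pow_antitone h1b0 h1b1 (by norm_num : (1:ℕ) ≤ 2)
      have h := tmono _ _ hpow
      simpa [pow_one, pow_two] using h
    have hre1b : (τ ((1:M) - b)).re ≤ 2 * ε := by
      rw [map_sub, hτ1]
      simp only [Complex.sub_re, Complex.one_re]
      nlinarith
    have hn21b : n2 ((1:M) - b) ≤ Real.sqrt (2 * ε) := by
      rw [hn2, show star ((1:M) - b) = 1 - b by rw [star_sub, star_one, hbsa]]
      exact Real.sqrt_le_sqrt (hsq2.trans hre1b)
    have hEz : n2 ((E v : M) - zz) ≤ Real.sqrt (2 * ε) := by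
      have h1 : (E v : M) - zz = zz * (b - 1) := by rw [hEzb, mul_sub, mul_one]
      rw [h1, n2lu _ _ hzu.1, n2subrev]
      exact hn21b
    calc n2 (v - zz) ≤ n2 (v - E v) + n2 ((E v : M) - zz) := trisub _ _ _
      _ ≤ ε + Real.sqrt (2 * ε) := add_le_add (le_of_eq hεdef.symm) hEz
  have unit_of2 : ∀ t : M, ‖t‖ ≤ 1 → n2 t = 1 → star t * t = 1 := by
    intro t ht hn
    refine unit_of t ht ?_
    rw [hn2] at hn
    exact Real.sqrt_eq_one.mp hn
  obtain ⟨u, hu, huconv⟩ := hα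
  exact jones_aux n2 (A : Set M) (fun ha hb => mul_mem ha hb) (fun y => E y)
    n2nonneg n2zero tri n2subrev trisub revtri n2lu n2ru n2unit n2mulr n2mull n2star
    unorm (fun x => norm_star x) unit_of2 hcentral nearZ hcomplete (fun x => α x) u hu huconv
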